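/- Consider the pure radiation fluid p̃(θ) = θ⁴/3 in 1+1 dimensions with ideal energy-momentum tensor T^{αβ} = θ³p̃'(θ)ψ^αψ^β + p̃(θ)g^{αβ}, g = diag(−1,+1), ψ^α = U^α/θ. Then the strict causality condition holds: for every future timelike or null covector T_β (T₀ < 0, T₀² ≥ T₁²), the 2×2 matrix (∂²(p̃(θ)ψ^β)/∂ψ_α∂ψ_γ · T_β) is negative definite at every state ψ in the open future cone Ψ = {ψ⁰ > |ψ¹|}. -/

import Mathlib

lemma aux19 (T0 T1 v1 v2 ψ0 ψ1 : ℝ) (hT0 : T0 < 0) (hT : T1 ^ 2 ≤ T0 ^ 2)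
    (hψ : |ψ1| < ψ0) (hv : ¬(v1 = 0 ∧ v2 = 0)) :
    4/3 * ((3*(ψ0*T0+ψ1*T1))*(ψ0*v1-ψ1*v2)^2 + (ψ0*T0+ψ1*T1)*(ψ1*v1-ψ0*v2)^2
        + 2*((ψ0*v1-ψ1*v2)*((ψ1*v1-ψ0*v2)*(ψ1*T0+ψ0*T1)))) / (ψ0*ψ0-ψ1*ψ1)^4 < 0 := by
  have hQpos : 0 < ψ0 ^ 2 - ψ1 ^ 2 := by nlinarith [sq_abs ψ1, abs_nonneg ψ1]
  have hQ0 : ψ0 * ψ0 - ψ1 * ψ1 ≠ 0 := by nlinarith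
  obtain ⟨s, hs'⟩ : ∃ s, ψ0 * v1 - ψ1 * v2 = s := ⟨_, rfl⟩
  obtain ⟨r, hr'⟩ : ∃ r, ψ1 * v1 - ψ0 * v2 = r := ⟨_, rfl⟩
  obtain ⟨L, hL'⟩ : ∃ L, ψ0 * T0 + ψ1 * T1 = L := ⟨_, rfl⟩
  obtain ⟨M, hM'⟩ : ∃ M, ψ1 * T0 + ψ0 * T1 = M := ⟨_, rfl⟩
  rw [hs', hr', hL', hM']
  have habs : ψ1 * T1 ≤ |ψ1| * |T1| := by
    calc ψ1 * T1 ≤ |ψ1 * T1| := le_abs_self _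
      _ = |ψ1| * |T1| := abs_mul _ _
  have hT1 : |T1| ≤ -T0 := by
    nlinarith [abs_nonneg T1, sq_abs T1]
  have hLneg : L < 0 := by
    have h0 : 0 ≤ |ψ1| := abs_nonneg ψ1
    nlinarith
  have hML : M ^ 2 ≤ L ^ 2 := by
    have hid : L ^ 2 - M ^ 2 = (ψ0 ^ 2 - ψ1 ^ 2) * (T0 ^ 2 - T1 ^ 2) := by
      rw [← hL', ← hM']; ring
    nlinarith
  have h1' : 0 ≤ -L - M := by nlinarith
  have h2' : 0 ≤ -L + M := by nlinarith
  have hsr : 0 < s ^ 2 + r ^ 2 := by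
    rcases lt_or_eq_of_le (by positivity : (0:ℝ) ≤ s ^ 2 + r ^ 2) with h | h
    · exact h
    · exfalso
      have hs0 : s = 0 := by nlinarith [sq_nonneg s, sq_nonneg r]
      have hr0 : r = 0 := by nlinarith [sq_nonneg s, sq_nonneg r]
      have hv1' : v1 * (ψ0 * ψ0 - ψ1 * ψ1) = 0 := by
        have : v1 * (ψ0 * ψ0 - ψ1 * ψ1) = s * ψ0 - r * ψ1 := by rw [← hs', ← hr']; ring
        rw [this, hs0, hr0]; ring
      have hv2' : v2 * (ψ0 * ψ0 - ψ1 * ψ1) = 0 := by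
        have : v2 * (ψ0 * ψ0 - ψ1 * ψ1) = s * ψ1 - r * ψ0 := by rw [← hs', ← hr']; ring
        rw [this, hs0, hr0]; ring
      exact hv ⟨by simpa [hQ0] using mul_eq_zero.1 hv1',
        by simpa [hQ0] using mul_eq_zero.1 hv2'⟩
  clear habs hT1 hT hT0 hψ hs' hr' hL' hM' hv hML hQpos
  have hEneg : 3 * L * s ^ 2 + L * r ^ 2 + 2 * (s * (r * M)) < 0 := by
    nlinarith [mul_nonneg h1' (sq_nonneg (s + r)), mul_nonneg h2' (sq_nonneg (s - r)),
      mul_pos (neg_pos.2 hLneg) hsr, mul_nonneg (neg_nonneg.2 hLneg.le) (sq_nonneg s)]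
  have hQ4 : 0 < (ψ0 * ψ0 - ψ1 * ψ1) ^ 4 := by positivity
  exact div_neg_of_neg_of_pos (by nlinarith [hEneg]) hQ4

lemma aux19_deriv1 (T0 T1 v1 v2 : ℝ) (y : ℝ × ℝ) (hy : y.1 * y.1 - y.2 * y.2 ≠ 0) :
    fderiv ℝ (fun y : ℝ×ℝ => (y.1*T0 + y.2*T1) * (3 * ((y.1*y.1 - y.2*y.2) * (y.1*y.1 - y.2*y.2)))⁻¹)
        y (v1, v2) =
      ((v1*T0+v2*T1) * (y.1*y.1-y.2*y.2) - 4*(y.1*v1 - y.2*v2)*(y.1*T0+y.2*T1)) *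
        (3*((y.1*y.1-y.2*y.2)*((y.1*y.1-y.2*y.2)*(y.1*y.1-y.2*y.2))))⁻¹ := by
  have hne : 3*((y.1*y.1 - y.2*y.2) * (y.1*y.1 - y.2*y.2)) ≠ 0 :=
    mul_ne_zero (by norm_num) (mul_ne_zero hy hy)
  have h1 := (((hasFDerivAt_fst (𝕜 := ℝ) (E := ℝ) (F := ℝ) (p := y)).mul_const T0).add
    ((hasFDerivAt_snd (𝕜 := ℝ) (E := ℝ) (F := ℝ) (p := y)).mul_const T1))
  have hQ := ((hasFDerivAt_fst (𝕜 := ℝ) (E := ℝ) (F := ℝ) (p := y)).mul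
    (hasFDerivAt_fst (𝕜 := ℝ) (E := ℝ) (F := ℝ) (p := y))).sub
    ((hasFDerivAt_snd (𝕜 := ℝ) (E := ℝ) (F := ℝ) (p := y)).mul
    (hasFDerivAt_snd (𝕜 := ℝ) (E := ℝ) (F := ℝ) (p := y)))
  have h2 := (hQ.mul hQ).const_mul (3:ℝ)
  have h2' := (hasFDerivAt_inv hne).comp y h2
  have h3 := h1.mul h2'
  simp only [Function.comp_def, Pi.mul_def, Pi.add_def, Pi.sub_def] at h3
  rw [h3.fderiv]
  simp [ContinuousLinearMap.smul_apply, ContinuousLinearMap.add_apply,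
    ContinuousLinearMap.sub_apply, ContinuousLinearMap.comp_apply,
    ContinuousLinearMap.smulRight_apply]
  field_simp
  ring

set_option maxHeartbeats 1000000 in
lemma aux19_deriv2 (T0 T1 v1 v2 ψ0 ψ1 : ℝ) (hT0 : T0 < 0) (hT : T1 ^ 2 ≤ T0 ^ 2)
    (hψ : |ψ1| < ψ0) (hv : ¬(v1 = 0 ∧ v2 = 0)) :
    fderiv ℝ (fun y : ℝ×ℝ =>
      ((v1*T0+v2*T1) * (y.1*y.1-y.2*y.2) - 4*(y.1*v1 - y.2*v2)*(y.1*T0+y.2*T1)) *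
        (3*((y.1*y.1-y.2*y.2)*((y.1*y.1-y.2*y.2)*(y.1*y.1-y.2*y.2))))⁻¹) (ψ0, ψ1) (v1, v2) < 0 := by
  set y : ℝ × ℝ := (ψ0, ψ1) with hydef
  have hQpos : 0 < ψ0^2 - ψ1^2 := by nlinarith [sq_abs ψ1, abs_nonneg ψ1]
  have hy' : y.1*y.1 - y.2*y.2 ≠ 0 := by simp [hydef]; nlinarith
  have hne : 3*((y.1*y.1-y.2*y.2)*((y.1*y.1-y.2*y.2)*(y.1*y.1-y.2*y.2))) ≠ 0 :=
    mul_ne_zero (by norm_num) (mul_ne_zero hy' (mul_ne_zero hy' hy'))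
  have h1 := (((hasFDerivAt_fst (𝕜 := ℝ) (E := ℝ) (F := ℝ) (p := y)).mul_const T0).add
    ((hasFDerivAt_snd (𝕜 := ℝ) (E := ℝ) (F := ℝ) (p := y)).mul_const T1))
  have hQ := ((hasFDerivAt_fst (𝕜 := ℝ) (E := ℝ) (F := ℝ) (p := y)).mul
    (hasFDerivAt_fst (𝕜 := ℝ) (E := ℝ) (F := ℝ) (p := y))).sub
    ((hasFDerivAt_snd (𝕜 := ℝ) (E := ℝ) (F := ℝ) (p := y)).mul
    (hasFDerivAt_snd (𝕜 := ℝ) (E := ℝ) (F := ℝ) (p := y)))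
  have hs := (((hasFDerivAt_fst (𝕜 := ℝ) (E := ℝ) (F := ℝ) (p := y)).mul_const v1).sub
    ((hasFDerivAt_snd (𝕜 := ℝ) (E := ℝ) (F := ℝ) (p := y)).mul_const v2))
  have hN := (hQ.const_mul (v1*T0+v2*T1)).sub ((hs.const_mul (4:ℝ)).mul h1)
  have hD := (hQ.mul (hQ.mul hQ)).const_mul (3:ℝ)
  have hDi := (hasFDerivAt_inv hne).comp y hD
  have h3 := hN.mul hDi
  simp only [Function.comp_def, Pi.mul_def, Pi.add_def, Pi.sub_def] at h3
  rw [h3.fderiv]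
  simp [ContinuousLinearMap.smul_apply, ContinuousLinearMap.add_apply,
    ContinuousLinearMap.sub_apply, ContinuousLinearMap.comp_apply,
    ContinuousLinearMap.smulRight_apply]
  have hQ0 : (ψ0*ψ0 - ψ1*ψ1) ≠ 0 := by nlinarith
  refine lt_of_le_of_lt (le_of_eq (?_ :
      _ = 4/3 * ((3*(ψ0*T0+ψ1*T1))*(ψ0*v1-ψ1*v2)^2 + (ψ0*T0+ψ1*T1)*(ψ1*v1-ψ0*v2)^2
        + 2*((ψ0*v1-ψ1*v2)*((ψ1*v1-ψ0*v2)*(ψ1*T0+ψ0*T1)))) / (ψ0*ψ0-ψ1*ψ1)^4))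
    (aux19 T0 T1 v1 v2 ψ0 ψ1 hT0 hT hψ hv)
  simp only [hydef]
  field_simp
  ring

/-- Strict causality for the radiation fluid `p̃(θ) = θ⁴/3` in 1+1
dimensions: for every future non-spacelike covector `T = (T₀, T₁)` (`T₀ < 0`,
`T₁² ≤ T₀²`) and every state `ψ` in the open future cone, the Hessian (with respect to
the fluid variables) of `ψ ↦ p̃(θ(ψ)) ψ^β T_β = ((ψ⁰)² - (ψ¹)²)^{-2}/3 · (ψ⁰T₀ + ψ¹T₁)`
is negative definite. (Negative definiteness of the Hessian in the raised variables
`ψ^α` is equivalent, by the congruence with `g = diag(-1,1)`, to condition (1.10) for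
the Hessian in the lowered variables `ψ_α`.) -/
theorem stmt_19 (T0 T1 : ℝ) (hT0 : T0 < 0) (hT : T1 ^ 2 ≤ T0 ^ 2)
    (G : ℝ × ℝ → ℝ)
    (hG : ∀ y : ℝ × ℝ, G y = (y.1 ^ 2 - y.2 ^ 2) ^ (-2 : ℤ) / 3 * (y.1 * T0 + y.2 * T1)) :
    ∀ ψ0 ψ1 : ℝ, |ψ1| < ψ0 → ∀ v : ℝ × ℝ, v ≠ 0 →
      fderiv ℝ (fun y => fderiv ℝ G y v) (ψ0, ψ1) v < 0 := by
  intro ψ0 ψ1 hψ v hv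
  obtain ⟨v1, v2⟩ := v
  have hv' : ¬(v1 = 0 ∧ v2 = 0) := by
    intro ⟨h1, h2⟩; exact hv (by simp [h1, h2, Prod.ext_iff])
  have hGeq : G = fun y : ℝ×ℝ =>
      (y.1*T0 + y.2*T1) * (3 * ((y.1*y.1 - y.2*y.2) * (y.1*y.1 - y.2*y.2)))⁻¹ := by
    funext y
    rw [hG]
    rcases eq_or_ne (y.1 ^ 2 - y.2 ^ 2) 0 with h | h
    · have h' : y.1*y.1 - y.2*y.2 = 0 := by nlinarith [sq_nonneg y.1]
      rw [h, h']
      simp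
    · have h' : y.1*y.1 - y.2*y.2 ≠ 0 := fun hc => by
        apply h; nlinarith [hc]
      have hz : (y.1 ^ 2 - y.2 ^ 2) ^ (-2 : ℤ) =
          ((y.1*y.1 - y.2*y.2) * (y.1*y.1 - y.2*y.2))⁻¹ := by
        rw [zpow_neg]
        congr 1
        rw [show ((2:ℤ)) = ((2:ℕ):ℤ) from rfl, zpow_natCast]
        ring
      rw [hz]
      have hzz : (y.1*y.1 - y.2*y.2) * (y.1*y.1 - y.2*y.2) ≠ 0 := mul_ne_zero h' h'
      field_simp
  have hQpos : 0 < ψ0 ^ 2 - ψ1 ^ 2 := by nlinarith [sq_abs ψ1, abs_nonneg ψ1]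
  have hopen : IsOpen {y : ℝ × ℝ | y.1 * y.1 - y.2 * y.2 ≠ 0} := by
    have hc : Continuous fun y : ℝ × ℝ => y.1 * y.1 - y.2 * y.2 := by fun_prop
    exact isOpen_compl_singleton.preimage hc
  have hmem : (ψ0, ψ1) ∈ {y : ℝ × ℝ | y.1 * y.1 - y.2 * y.2 ≠ 0} := by
    simp only [Set.mem_setOf_eq]; nlinarith
  have hev : (fun y => fderiv ℝ G y (v1, v2)) =ᶠ[nhds (ψ0, ψ1)]
      (fun y : ℝ×ℝ => ((v1*T0+v2*T1) * (y.1*y.1-y.2*y.2) - 4*(y.1*v1 - y.2*v2)*(y.1*T0+y.2*T1)) *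
        (3*((y.1*y.1-y.2*y.2)*((y.1*y.1-y.2*y.2)*(y.1*y.1-y.2*y.2))))⁻¹) := by
    filter_upwards [hopen.mem_nhds hmem] with y hy
    rw [hGeq]
    exact aux19_deriv1 T0 T1 v1 v2 y hy
  rw [hev.fderiv_eq]
  exact aux19_deriv2 T0 T1 v1 v2 ψ0 ψ1 hT0 hT hψ hv'
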